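/- For every metric space H, either c_H(A) = 1 for every finite nonempty subset A ⊂ ℝ (with the metric induced from the absolute value), or there exist β > 0 and c > 0 such that c_H(P_n) ≥ c·n^β for every n ≥ 1. -/

import Mathlib

open scoped Classical in
/-- The Lipschitz norm `‖f‖_Lip = sup_{x ≠ y} d(f x, f y) / d(x, y)` of a map between
(pseudo)metric spaces. -/
noncomputable def lipNorm {X H : Type*} [PseudoMetricSpace X] [PseudoMetricSpace H]
    (f : X → H) : ℝ :=
  ⨆ p : X × X, if p.1 = p.2 then 0 else dist (f p.1) (f p.2) / dist p.1 p.2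

open scoped Classical in
/-- The Lipschitz norm of the inverse of an injective map `f`, i.e.
`‖f⁻¹‖_Lip = sup_{x ≠ y} d(x, y) / d(f x, f y)`. -/
noncomputable def colipNorm {X H : Type*} [PseudoMetricSpace X] [PseudoMetricSpace H]
    (f : X → H) : ℝ :=
  ⨆ p : X × X, if p.1 = p.2 then 0 else dist p.1 p.2 / dist (f p.1) (f p.2)

/-- The distortion `dist(f) = ‖f‖_Lip * ‖f⁻¹‖_Lip` of an (injective) map between metric spaces. -/
noncomputable def distortion {X H : Type*} [PseudoMetricSpace X] [PseudoMetricSpace H]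
    (f : X → H) : ℝ := lipNorm f * colipNorm f

/-- The path `P n = {0, 1, …, n}`, realized as a subset of `ℝ` (so that the induced metric is
`d(i,j) = |i - j|`). -/
def PathSet (n : ℕ) : Set ℝ := {x | ∃ k : ℕ, k ≤ n ∧ x = (k : ℝ)}

section helpers
open scoped Classical
variable {X H : Type*} [PseudoMetricSpace X] [PseudoMetricSpace H]

lemma le_lipNorm [Finite X] (f : X → H) {x y : X} (h : x ≠ y) :
    dist (f x) (f y) / dist x y ≤ lipNorm f := by
  have := le_ciSup (f := fun p : X × X =>
      if p.1 = p.2 then (0:ℝ) else dist (f p.1) (f p.2) / dist p.1 p.2)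
    (Set.Finite.bddAbove (Set.finite_range _)) (⟨x, y⟩ : X × X)
  rwa [if_neg h] at this

lemma le_colipNorm [Finite X] (f : X → H) {x y : X} (h : x ≠ y) :
    dist x y / dist (f x) (f y) ≤ colipNorm f := by
  have := le_ciSup (f := fun p : X × X =>
      if p.1 = p.2 then (0:ℝ) else dist p.1 p.2 / dist (f p.1) (f p.2))
    (Set.Finite.bddAbove (Set.finite_range _)) (⟨x, y⟩ : X × X)
  rwa [if_neg h] at this

lemma lipNorm_le [Nonempty X] (f : X → H) {C : ℝ} (hC : 0 ≤ C)
    (h : ∀ x y : X, x ≠ y → dist (f x) (f y) ≤ C * dist x y) : lipNorm f ≤ C := by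
  refine ciSup_le fun p => ?_
  by_cases e : p.1 = p.2
  · simpa [e] using hC
  · rw [if_neg e]
    rcases eq_or_lt_of_le (dist_nonneg (x := p.1) (y := p.2)) with hd | hd
    · simp [← hd, hC]
    · exact (div_le_iff₀ hd).mpr (h _ _ e)

lemma colipNorm_le [Nonempty X] (f : X → H) {C : ℝ} (hC : 0 ≤ C)
    (h : ∀ x y : X, x ≠ y → dist x y ≤ C * dist (f x) (f y)) : colipNorm f ≤ C := by
  refine ciSup_le fun p => ?_
  by_cases e : p.1 = p.2
  · simpa [e] using hC
  · rw [if_neg e]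
    rcases eq_or_lt_of_le (dist_nonneg (x := f p.1) (y := f p.2)) with hd | hd
    · simp [← hd, hC]
    · exact (div_le_iff₀ hd).mpr (h _ _ e)

lemma lipNorm_nonneg [Finite X] [Nonempty X] (f : X → H) : 0 ≤ lipNorm f := by
  have x := Classical.arbitrary X
  have := le_ciSup (f := fun p : X × X =>
      if p.1 = p.2 then (0:ℝ) else dist (f p.1) (f p.2) / dist p.1 p.2)
    (Set.Finite.bddAbove (Set.finite_range _)) (⟨x, x⟩ : X × X)
  rwa [if_pos rfl] at this

lemma colipNorm_nonneg [Finite X] [Nonempty X] (f : X → H) : 0 ≤ colipNorm f := by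
  have x := Classical.arbitrary X
  have := le_ciSup (f := fun p : X × X =>
      if p.1 = p.2 then (0:ℝ) else dist p.1 p.2 / dist (f p.1) (f p.2))
    (Set.Finite.bddAbove (Set.finite_range _)) (⟨x, x⟩ : X × X)
  rwa [if_pos rfl] at this

lemma dist_le_lipNorm_mul {X : Type*} [MetricSpace X] [Finite X] (f : X → H) (x y : X) :
    dist (f x) (f y) ≤ lipNorm f * dist x y := by
  rcases eq_or_ne x y with rfl | h
  · simp
  · have hd : (0:ℝ) < dist x y := dist_pos.mpr h
    have := le_lipNorm f h
    calc dist (f x) (f y) = dist (f x) (f y) / dist x y * dist x y := by field_simp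
    _ ≤ lipNorm f * dist x y := by
      exact mul_le_mul_of_nonneg_right this hd.le

lemma dist_le_colipNorm_mul {H : Type*} [MetricSpace H] [Finite X] (f : X → H)
    (hf : Function.Injective f) (x y : X) :
    dist x y ≤ colipNorm f * dist (f x) (f y) := by
  rcases eq_or_ne x y with rfl | h
  · simp
  · have hd : (0:ℝ) < dist (f x) (f y) := dist_pos.mpr (fun e => h (hf e))
    have := le_colipNorm f h
    calc dist x y = dist x y / dist (f x) (f y) * dist (f x) (f y) := by field_simp
    _ ≤ colipNorm f * dist (f x) (f y) := mul_le_mul_of_nonneg_right this hd.le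

lemma distortion_comp_le {X Y : Type*} [MetricSpace X] [MetricSpace Y] {H : Type*}
    [MetricSpace H] [Finite Y] [Nonempty X] (f : Y → H) (hf : Function.Injective f)
    (e : X → Y) (he : ∀ x y : X, dist (e x) (e y) = dist x y) :
    distortion (f ∘ e) ≤ distortion f := by
  haveI : Nonempty Y := ⟨e (Classical.arbitrary X)⟩
  have hei : Function.Injective e := fun x y h => by
    have := he x y; rw [h, dist_self] at this
    exact dist_le_zero.mp this.ge
  have h1 : lipNorm (f ∘ e) ≤ lipNorm f := by
    haveI : Nonempty Y := ⟨e (Classical.arbitrary X)⟩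
    refine lipNorm_le _ (lipNorm_nonneg f) fun x y h => ?_
    simpa [he] using dist_le_lipNorm_mul f (e x) (e y)
  have h2 : colipNorm (f ∘ e) ≤ colipNorm f := by
    haveI : Nonempty Y := ⟨e (Classical.arbitrary X)⟩
    refine colipNorm_le _ (colipNorm_nonneg f) fun x y h => ?_
    have := dist_le_colipNorm_mul f hf (e x) (e y)
    rwa [he] at this
  have hX : Finite X := Finite.of_injective e hei
  exact mul_le_mul h1 h2 (colipNorm_nonneg _) (lipNorm_nonneg f)

end helpers

section path
open scoped Classical

lemma pathSet_finite (n : ℕ) : (PathSet n).Finite := by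
  have h : PathSet n ⊆ (fun k : ℕ => (k:ℝ)) '' Set.Iic n := by
    rintro x ⟨k, hk, rfl⟩; exact ⟨k, hk, rfl⟩
  exact ((Set.finite_Iic n).image _).subset h

instance pathSet_finite' (n : ℕ) : Finite (PathSet n) := (pathSet_finite n).to_subtype

def pt (n k : ℕ) (h : k ≤ n) : PathSet n := ⟨(k:ℝ), k, h, rfl⟩

instance pathSet_nonempty (n : ℕ) : Nonempty (PathSet n) := ⟨pt n 0 n.zero_le⟩

noncomputable def idx {n : ℕ} (x : PathSet n) : ℕ := x.2.choose

lemma idx_le {n : ℕ} (x : PathSet n) : idx x ≤ n := x.2.choose_spec.1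

lemma cast_idx {n : ℕ} (x : PathSet n) : (idx x : ℝ) = x.val := x.2.choose_spec.2.symm

lemma idx_pt (n k : ℕ) (h : k ≤ n) : idx (pt n k h) = k :=
  Nat.cast_injective (by rw [cast_idx]; rfl)

lemma pathSet_dist {n : ℕ} (x y : PathSet n) : dist x y = |(idx x : ℝ) - idx y| := by
  rw [Subtype.dist_eq, Real.dist_eq, cast_idx, cast_idx]

lemma pt_dist (n p q : ℕ) (hp : p ≤ n) (hq : q ≤ n) :
    dist (pt n p hp) (pt n q hq) = |(p:ℝ) - q| := by
  rw [pathSet_dist, idx_pt, idx_pt]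

lemma pathSet_ext {n : ℕ} {x y : PathSet n} (h : idx x = idx y) : x = y :=
  Subtype.ext (by rw [← cast_idx, ← cast_idx, h])

def inclP {a b : ℕ} (h : a ≤ b) : PathSet a → PathSet b := fun x =>
  ⟨x.1, by obtain ⟨k, hk, e⟩ := x.2; exact ⟨k, hk.trans h, e⟩⟩

lemma inclP_dist {a b : ℕ} (h : a ≤ b) (x y : PathSet a) :
    dist (inclP h x) (inclP h y) = dist x y := by
  rw [Subtype.dist_eq, Subtype.dist_eq]; rfl

lemma inclP_injective {a b : ℕ} (h : a ≤ b) : Function.Injective (inclP h) := by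
  intro x y e
  have h2 := congrArg Subtype.val e
  exact Subtype.ext h2

lemma inclP_pt {a b : ℕ} (h : a ≤ b) (k : ℕ) (hk : k ≤ a) :
    inclP h (pt a k hk) = pt b k (hk.trans h) := rfl

end path

section boot
variable {H : Type*} [MetricSpace H]

lemma boot (m : ℕ) (hm : 2 ≤ m) (δ θ : ℝ) (hθ0 : 0 < θ)
    (hθm : θ * m < 1) (hθδ : 1 ≤ (1 + δ) * (1 - θ * m))
    (P : ∀ g : PathSet m → H, Function.Injective g → 1 + δ < distortion g) (k : ℕ) :
    ∀ f : PathSet (m ^ k) → H, Function.Injective f → ∀ L : ℝ, 0 < L →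
      (∀ x y : PathSet (m ^ k), dist (f x) (f y) ≤ L * dist x y) →
      dist (f (pt (m ^ k) 0 (Nat.zero_le _))) (f (pt (m ^ k) (m ^ k) le_rfl)) ≤
        (1 - θ) ^ k * (L * ((m : ℝ) ^ k)) := by
  have hm0 : (0:ℕ) < m := by omega
  have hmR : (1:ℝ) ≤ m := by exact_mod_cast Nat.one_le_iff_ne_zero.mpr (by omega)
  have hθ1 : θ < 1 := by nlinarith
  induction k with
  | zero =>
    intro f hf L hL hLip
    have h1 : dist (pt (m ^ 0) 0 (Nat.zero_le _)) (pt (m ^ 0) (m ^ 0) le_rfl) = 1 := by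
      rw [pt_dist]; simp
    have := hLip (pt (m ^ 0) 0 (Nat.zero_le _)) (pt (m ^ 0) (m ^ 0) le_rfl)
    rw [h1] at this
    simpa using this
  | succ k IH =>
    intro f hf L hL hLip
    set N := m ^ k with hN
    have hNpos : 0 < N := Nat.pow_pos hm0
    have hmN : m ^ (k + 1) = m * N := by rw [pow_succ]; ring
    set u := (1 - θ) ^ k * (L * ((m:ℝ) ^ k)) with hu
    have hupos : 0 < u := by
      have : (0:ℝ) < 1 - θ := by linarith
      positivity
    have hmem : ∀ {i : ℕ}, i ≤ m → i * N ≤ m ^ (k + 1) := fun {i} hi => by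
      rw [hmN]; exact Nat.mul_le_mul_right N hi
    -- block estimate from induction hypothesis
    have hblock : ∀ i (hi : i < m),
        dist (f (pt _ (i * N) (hmem (by omega)))) (f (pt _ ((i + 1) * N) (hmem (by omega)))) ≤
          u := by
      intro i hi
      have hEm : ∀ x : PathSet N, x.1 + (i * N : ℕ) ∈ PathSet (m ^ (k + 1)) := by
        rintro ⟨x, j, hj, rfl⟩
        refine ⟨j + i * N, ?_, by push_cast; ring⟩
        calc j + i * N ≤ N + i * N := by omega
        _ = (i + 1) * N := by ring
        _ ≤ m * N := Nat.mul_le_mul_right N (by omega)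
        _ = m ^ (k + 1) := hmN.symm
      set E : PathSet N → PathSet (m ^ (k + 1)) := fun x => ⟨x.1 + (i * N : ℕ), hEm x⟩ with hE
      have hEdist : ∀ x y : PathSet N, dist (E x) (E y) = dist x y := by
        intro x y
        rw [Subtype.dist_eq, Subtype.dist_eq, Real.dist_eq, Real.dist_eq]
        show |x.1 + (i*N:ℕ) - (y.1 + (i*N:ℕ))| = _
        ring_nf
      have hEinj : Function.Injective E := by
        intro x y hxy
        have : x.1 + (i * N : ℕ) = y.1 + (i * N : ℕ) := congrArg Subtype.val hxy
        exact Subtype.ext (by linarith)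
      have := IH (f ∘ E) (hf.comp hEinj) L hL
        (fun x y => by simpa [Function.comp, hEdist x y] using hLip (E x) (E y))
      have e1 : E (pt N 0 (Nat.zero_le _)) = pt _ (i * N) (hmem (by omega)) :=
        Subtype.ext (by show ((0:ℕ):ℝ) + ((i*N:ℕ):ℝ) = ((i*N:ℕ):ℝ); push_cast; ring)
      have e2 : E (pt N N le_rfl) = pt _ ((i + 1) * N) (hmem (by omega)) :=
        Subtype.ext (by show ((N:ℕ):ℝ) + ((i*N:ℕ):ℝ) = (((i+1)*N:ℕ):ℝ); push_cast; ring)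
      rw [Function.comp_apply, Function.comp_apply, e1, e2] at this
      exact this
    -- chains
    have hchain : ∀ p j (hpj : p + j ≤ m),
        dist (f (pt _ (p * N) (hmem (by omega)))) (f (pt _ ((p + j) * N) (hmem (by omega)))) ≤
          (j : ℝ) * u := by
      intro p j
      induction j with
      | zero => intro h; simp
      | succ j ihj =>
        intro h
        have h1 : p + j ≤ m := by omega
        calc dist (f (pt _ (p * N) (hmem (by omega)))) (f (pt _ ((p + (j+1)) * N) (hmem (by omega))))
            ≤ dist (f (pt _ (p * N) (hmem (by omega)))) (f (pt _ ((p + j) * N) (hmem (by omega))))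
              + dist (f (pt _ ((p + j) * N) (hmem (by omega)))) (f (pt _ ((p + (j+1)) * N) (hmem (by omega)))) := dist_triangle _ _ _
        _ ≤ (j : ℝ) * u + u := by
            have hb := hblock (p + j) (by omega)
            exact add_le_add (ihj h1) hb
        _ = ((j + 1 : ℕ) : ℝ) * u := by push_cast; ring
    have hchain' : ∀ p q (hpq : p ≤ q) (hq : q ≤ m),
        dist (f (pt _ (p * N) (hmem (by omega)))) (f (pt _ (q * N) (hmem (by omega)))) ≤
          ((q : ℝ) - p) * u := by
      intro p q hpq hq
      obtain ⟨j, rfl⟩ := Nat.exists_eq_add_of_le hpq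
      have := hchain p j (by omega)
      convert this using 2 <;> push_cast <;> ring
    -- rewrite the goal endpoints
    have e0 : pt (m ^ (k + 1)) 0 (Nat.zero_le _) = pt _ (0 * N) (hmem (Nat.zero_le m)) :=
      Subtype.ext (by show ((0:ℕ):ℝ) = ((0 * N:ℕ):ℝ); norm_num)
    have eTop : pt (m ^ (k + 1)) (m ^ (k + 1)) le_rfl = pt _ (m * N) (hmem le_rfl) :=
      Subtype.ext (by show ((m ^ (k+1):ℕ):ℝ) = ((m * N:ℕ):ℝ); exact_mod_cast hmN)
    have hRHS : (1 - θ) ^ (k + 1) * (L * ((m:ℝ) ^ (k + 1))) = (1 - θ) * ((m:ℝ) * u) := by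
      rw [hu]; ring
    rw [e0, eTop, hRHS]
    by_contra hcon
    push_neg at hcon
    set g : PathSet m → H := fun x => f (pt _ (idx x * N) (hmem (idx_le x))) with hg
    have hginj : Function.Injective g := by
      intro x y hxy
      have h1 := hf hxy
      have h2 : idx x * N = idx y * N := by
        have := congrArg idx h1
        rwa [idx_pt, idx_pt] at this
      exact pathSet_ext (Nat.eq_of_mul_eq_mul_right hNpos h2)
    have hgupper : ∀ x y : PathSet m, dist (g x) (g y) ≤ u * dist x y := by
      have key : ∀ x y : PathSet m, idx x ≤ idx y → dist (g x) (g y) ≤ u * dist x y := by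
        intro x y hxy
        have h : dist (g x) (g y) ≤ ((idx y : ℝ) - idx x) * u :=
          hchain' (idx x) (idx y) hxy (idx_le y)
        have hcast : (idx x : ℝ) ≤ idx y := Nat.cast_le.mpr hxy
        have hdxy : dist x y = (idx y : ℝ) - idx x := by
          rw [pathSet_dist, abs_sub_comm, abs_of_nonneg (by linarith)]
        rw [hdxy, mul_comm]; exact h
      intro x y
      rcases le_total (idx x) (idx y) with h | h
      · exact key x y h
      · rw [dist_comm, dist_comm x y]; exact key y x h
    have hglower : ∀ x y : PathSet m, idx x < idx y →
        ((idx y : ℝ) - idx x - θ * m) * u ≤ dist (g x) (g y) := by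
      intro x y hxy
      have h1 : dist (f (pt _ (0 * N) (hmem (Nat.zero_le m)))) (g x) ≤
          ((idx x : ℝ) - ((0:ℕ):ℝ)) * u := hchain' 0 (idx x) (Nat.zero_le _) (idx_le x)
      have h2 : dist (g y) (f (pt _ (m * N) (hmem le_rfl))) ≤ ((m : ℝ) - idx y) * u :=
        hchain' (idx y) m (idx_le y) le_rfl
      have h3 : dist (f (pt _ (0 * N) (hmem (Nat.zero_le m)))) (f (pt _ (m * N) (hmem le_rfl))) ≤
          dist (f (pt _ (0 * N) (hmem (Nat.zero_le m)))) (g x) + dist (g x) (g y) +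
            dist (g y) (f (pt _ (m * N) (hmem le_rfl))) := dist_triangle4 _ _ _ _
      push_cast at h1
      nlinarith [hcon, h1, h2, h3]
    have hlip : lipNorm g ≤ u := lipNorm_le g hupos.le fun x y _ => hgupper x y
    have h1θm : (0:ℝ) < 1 - θ * m := by linarith
    have hcolip : colipNorm g ≤ 1 / ((1 - θ * m) * u) := by
      refine colipNorm_le g (by positivity) fun x y hxy => ?_
      have hne : idx x ≠ idx y := fun e => hxy (pathSet_ext e)
      have key : ∀ x y : PathSet m, idx x < idx y →
          dist x y ≤ 1 / ((1 - θ * m) * u) * dist (g x) (g y) := by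
        intro x y hlt
        have hlow := hglower x y hlt
        have hone : (1:ℝ) ≤ (idx y : ℝ) - idx x := by
          have h' : idx x + 1 ≤ idx y := hlt
          have h'' : ((idx x : ℝ) + 1) ≤ idx y := by exact_mod_cast h'
          linarith
        have hdxy : dist x y = (idx y : ℝ) - idx x := by
          rw [pathSet_dist, abs_sub_comm, abs_of_nonneg (by linarith)]
        have hθmnn : (0:ℝ) ≤ θ * m := mul_nonneg hθ0.le (Nat.cast_nonneg m)
        have hstep : ((idx y : ℝ) - idx x) * ((1 - θ * m) * u) ≤ dist (g x) (g y) := by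
          nlinarith [mul_nonneg (mul_nonneg hθmnn hupos.le) (by linarith : (0:ℝ) ≤ (idx y : ℝ) - idx x - 1)]
        rw [hdxy, one_div, inv_mul_eq_div, le_div_iff₀ (mul_pos h1θm hupos)]
        exact hstep
      rcases hne.lt_or_gt with h | h
      · exact key x y h
      · rw [dist_comm, dist_comm (g x)]; exact key y x h
    have hdist : distortion g ≤ 1 / (1 - θ * m) := by
      have hmul := mul_le_mul hlip hcolip (colipNorm_nonneg g) hupos.le
      calc distortion g ≤ u * (1 / ((1 - θ * m) * u)) := hmul
      _ = 1 / (1 - θ * m) := by field_simp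
    have hfin : distortion g ≤ 1 + δ :=
      le_trans hdist ((div_le_iff₀ h1θm).mpr (by linarith [hθδ]))
    exact absurd (P g hginj) (not_lt.mpr hfin)
end boot

section subsing
open scoped Classical
variable {X H : Type*} [PseudoMetricSpace X] [PseudoMetricSpace H]

lemma lipNorm_of_subsingleton [Nonempty X] (hs : ∀ x y : X, x = y) (f : X → H) :
    lipNorm f = 0 := by
  have h : ∀ p : X × X, (if p.1 = p.2 then (0:ℝ) else dist (f p.1) (f p.2) / dist p.1 p.2) = 0 :=
    fun p => if_pos (hs _ _)
  calc lipNorm f = ⨆ _ : X × X, (0:ℝ) := iSup_congr h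
  _ = 0 := ciSup_const

lemma colipNorm_of_subsingleton [Nonempty X] (hs : ∀ x y : X, x = y) (f : X → H) :
    colipNorm f = 0 := by
  have h : ∀ p : X × X, (if p.1 = p.2 then (0:ℝ) else dist p.1 p.2 / dist (f p.1) (f p.2)) = 0 :=
    fun p => if_pos (hs _ _)
  calc colipNorm f = ⨆ _ : X × X, (0:ℝ) := iSup_congr h
  _ = 0 := ciSup_const

end subsing



set_option maxHeartbeats 1000000 in
/-- For every metric space `H`: either `c_H A = 1` for every finite nonempty
subset `A ⊆ ℝ` (every such `A` embeds in `H` with distortion arbitrarily close to 1), or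
there are `β > 0` and `c > 0` with `c_H (P n) ≥ c * n ^ β` for all `n ≥ 1` (every injective
map of the path `P n` into `H` has distortion at least `c * n ^ β`). -/
theorem line_dichotomy (H : Type*) [MetricSpace H] :
    (∀ A : Set ℝ, A.Finite → A.Nonempty →
      ∀ ε : ℝ, 0 < ε → ∃ f : A → H, Function.Injective f ∧ distortion f ≤ 1 + ε) ∨
    (∃ β : ℝ, 0 < β ∧ ∃ c : ℝ, 0 < c ∧ ∀ n : ℕ, 1 ≤ n →
      ∀ f : PathSet n → H, Function.Injective f → c * (n : ℝ) ^ β ≤ distortion f) := by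
  rcases isEmpty_or_nonempty H with hE | hNE
  · exact Or.inr ⟨1, one_pos, 1, one_pos, fun n hn f hf =>
      (hE.false (f (pt n 0 (Nat.zero_le _)))).elim⟩
  by_cases hQ : ∀ m : ℕ, ∀ ε : ℝ, 0 < ε →
      ∃ g : PathSet m → H, Function.Injective g ∧ distortion g ≤ 1 + ε
  · left
    intro A hA hAne ε hε
    haveI : Finite A := hA.to_subtype
    haveI : Nonempty A := hAne.to_subtype
    set ε' := min ε 1 with hε'def
    have hε'0 : 0 < ε' := lt_min hε one_pos
    have hε'1 : ε' ≤ 1 := min_le_right _ _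
    have hε'ε : ε' ≤ ε := min_le_left _ _
    by_cases hsing : ∀ a ∈ A, ∀ b ∈ A, a = b
    · obtain ⟨g, hg, -⟩ := hQ 1 1 one_pos
      refine ⟨fun _ => g (pt 1 0 (Nat.zero_le _)),
        fun x y _ => Subtype.ext (hsing _ x.2 _ y.2), ?_⟩
      have hss : ∀ x y : A, x = y := fun x y => Subtype.ext (hsing _ x.2 _ y.2)
      have : distortion (fun _ : A => g (pt 1 0 (Nat.zero_le _))) = 0 := by
        rw [distortion, lipNorm_of_subsingleton hss, colipNorm_of_subsingleton hss, mul_zero]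
      rw [this]; linarith
    · push_neg at hsing
      obtain ⟨a1, ha1, b1, hb1, hab1⟩ := hsing
      set F : Finset ℝ := ((hA.toFinset ×ˢ hA.toFinset).filter fun p => p.1 ≠ p.2).image
        (fun p => |p.1 - p.2|) with hFdef
      have hFne : F.Nonempty := ⟨|a1 - b1|, Finset.mem_image.mpr ⟨(a1, b1),
        Finset.mem_filter.mpr ⟨Finset.mem_product.mpr
          ⟨hA.mem_toFinset.mpr ha1, hA.mem_toFinset.mpr hb1⟩, hab1⟩, rfl⟩⟩
      set s := F.min' hFne with hsdef
      have hs0 : 0 < s := by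
        have hmem : s ∈ F := F.min'_mem hFne
        rw [hFdef, Finset.mem_image] at hmem
        obtain ⟨p, hp, he⟩ := hmem
        have hne := (Finset.mem_filter.mp hp).2
        rw [← he]
        exact abs_pos.mpr (sub_ne_zero.mpr hne)
      have hsle : ∀ x ∈ A, ∀ y ∈ A, x ≠ y → s ≤ |x - y| := fun x hx y hy hxy =>
        F.min'_le _ (Finset.mem_image.mpr ⟨(x, y), Finset.mem_filter.mpr
          ⟨Finset.mem_product.mpr ⟨hA.mem_toFinset.mpr hx, hA.mem_toFinset.mpr hy⟩, hxy⟩, rfl⟩)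
      obtain ⟨a₀, ha₀A, ha₀⟩ := Set.exists_min_image A (fun x => x) hA hAne
      obtain ⟨a₁, ha₁A, ha₁⟩ := Set.exists_max_image A (fun x => x) hA hAne
      set lam := (2 + 8 / ε') / s with hlamdef
      have hlam0 : 0 < lam := div_pos (by positivity) hs0
      have hlams : lam * s = 2 + 8 / ε' := div_mul_cancel₀ _ hs0.ne'
      set τ := 1 / (lam * s) with hτdef
      have hτ0 : 0 < τ := by rw [hτdef, hlams]; positivity
      have h8 : (0:ℝ) < 8 / ε' := by positivity
      have hτε : τ ≤ ε' / 8 := by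
        calc τ = 1 / (2 + 8 / ε') := by rw [hτdef, hlams]
        _ ≤ 1 / (8 / ε') := one_div_le_one_div_of_le h8 (by linarith)
        _ = ε' / 8 := one_div_div _ _
      have hτ1 : τ < 1 := by linarith
      have hτls : τ * (lam * s) = 1 := by
        rw [hτdef, hlams]; field_simp
      set r : A → ℕ := fun x => ⌊lam * (x.1 - a₀)⌋₊ with hrdef
      set M := ⌊lam * (a₁ - a₀)⌋₊ + 1 with hMdef
      have hrM : ∀ x : A, r x ≤ M := fun x => le_trans
        (Nat.floor_mono (mul_le_mul_of_nonneg_left (by linarith [ha₁ x.1 x.2]) hlam0.le))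
        (Nat.le_succ _)
      have hfloor : ∀ x : A, lam * (x.1 - a₀) - 1 < (r x : ℝ) ∧ (r x : ℝ) ≤ lam * (x.1 - a₀) :=
        fun x => ⟨Nat.sub_one_lt_floor _,
          Nat.floor_le (mul_nonneg hlam0.le (by linarith [ha₀ x.1 x.2]))⟩
      have hrdiff : ∀ x y : A, |(r x : ℝ) - r y - lam * (x.1 - y.1)| ≤ 1 := by
        intro x y
        obtain ⟨h1x, h2x⟩ := hfloor x
        obtain ⟨h1y, h2y⟩ := hfloor y
        rw [abs_le]
        constructor <;> nlinarith
      have hrup : ∀ x y : A, |(r x : ℝ) - r y| ≤ lam * |x.1 - y.1| + 1 := by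
        intro x y
        have h := hrdiff x y
        have habs := abs_sub_abs_le_abs_sub ((r x : ℝ) - r y) (lam * (x.1 - y.1))
        have hl : |lam * (x.1 - y.1)| = lam * |x.1 - y.1| := by
          rw [abs_mul, abs_of_pos hlam0]
        linarith [habs, h, hl.ge, hl.le]
      have hrlow : ∀ x y : A, lam * |x.1 - y.1| - 1 ≤ |(r x : ℝ) - r y| := by
        intro x y
        have h := hrdiff x y
        have habs := abs_sub_abs_le_abs_sub (lam * (x.1 - y.1)) ((r x : ℝ) - r y)
        have hl : |lam * (x.1 - y.1)| = lam * |x.1 - y.1| := by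
          rw [abs_mul, abs_of_pos hlam0]
        have h2 : |lam * (x.1 - y.1) - ((r x : ℝ) - r y)| ≤ 1 := by
          rw [abs_sub_comm]; exact h
        linarith [habs, hl.ge, hl.le]
      have hone : ∀ x y : A, x ≠ y → 1 ≤ τ * (lam * |x.1 - y.1|) := by
        intro x y hxy
        have hxv : x.1 ≠ y.1 := fun e => hxy (Subtype.ext e)
        have hs := hsle x.1 x.2 y.1 y.2 hxv
        calc (1:ℝ) = τ * (lam * s) := hτls.symm
        _ ≤ τ * (lam * |x.1 - y.1|) := by
          apply mul_le_mul_of_nonneg_left _ hτ0.le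
          exact mul_le_mul_of_nonneg_left hs hlam0.le
      have hrsep : ∀ x y : A, x ≠ y → 1 ≤ |(r x : ℝ) - r y| := by
        intro x y hxy
        have h1 := hone x y hxy
        have h2 := hrlow x y
        nlinarith [h1, h2, mul_nonneg (by linarith : (0:ℝ) ≤ 1 - 8 * τ)
          (mul_nonneg hlam0.le (abs_nonneg (x.1 - y.1)))]
      obtain ⟨g, hginj, hgdist⟩ := hQ M (ε' / 8) (by positivity)
      set φ : A → PathSet M := fun x => pt M (r x) (hrM x) with hφdef
      set f : A → H := fun x => g (φ x) with hfdef
      have hφval : ∀ x : A, (φ x).1 = (r x : ℝ) := fun x => rfl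
      have hfinj : Function.Injective f := by
        intro x y hxy
        by_contra hne
        have h1 := hrsep x y hne
        have h2 : φ x = φ y := hginj hxy
        have h3 : (r x : ℝ) = r y := congrArg Subtype.val h2
        rw [h3] at h1
        simp at h1
        linarith
      have hLg0 : 0 ≤ lipNorm g := lipNorm_nonneg g
      have hCg0 : 0 < colipNorm g := by
        have h01 : pt M 0 (Nat.zero_le _) ≠ pt M 1 (by omega : 1 ≤ M) := fun e => by
          have h2 : ((0:ℕ):ℝ) = ((1:ℕ):ℝ) := congrArg Subtype.val e
          norm_num at h2
        have hcl := le_colipNorm g h01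
        have hd : dist (pt M 0 (Nat.zero_le _)) (pt M 1 (by omega : 1 ≤ M)) = 1 := by
          rw [pt_dist]; norm_num
        have hdg : 0 < dist (g (pt M 0 (Nat.zero_le _))) (g (pt M 1 (by omega : 1 ≤ M))) :=
          dist_pos.mpr fun e => h01 (hginj e)
        rw [hd] at hcl
        calc (0:ℝ) < 1 / dist (g (pt M 0 (Nat.zero_le _))) (g (pt M 1 (by omega : 1 ≤ M))) := by
              positivity
        _ ≤ colipNorm g := hcl
      have hφdist : ∀ x y : A, dist (φ x) (φ y) = |(r x : ℝ) - r y| := fun x y =>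
        pt_dist M (r x) (r y) (hrM x) (hrM y)
      have hdA : ∀ x y : A, dist x y = |x.1 - y.1| := fun x y => by
        rw [Subtype.dist_eq, Real.dist_eq]
      have hlipf : lipNorm f ≤ lipNorm g * (lam * (1 + τ)) := by
        refine lipNorm_le f (by positivity) fun x y hxy => ?_
        have h1 : dist (f x) (f y) ≤ lipNorm g * |(r x : ℝ) - r y| := by
          have h := dist_le_lipNorm_mul g (φ x) (φ y)
          rwa [hφdist] at h
        have h2 := hrup x y
        have h3 := hone x y hxy
        calc dist (f x) (f y) ≤ lipNorm g * (lam * |x.1 - y.1| + 1) :=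
          le_trans h1 (mul_le_mul_of_nonneg_left h2 hLg0)
        _ ≤ lipNorm g * (lam * |x.1 - y.1| + τ * (lam * |x.1 - y.1|)) :=
          mul_le_mul_of_nonneg_left (by linarith) hLg0
        _ = lipNorm g * (lam * (1 + τ)) * |x.1 - y.1| := by ring
        _ = lipNorm g * (lam * (1 + τ)) * dist x y := by rw [hdA]
      have hcolipf : colipNorm f ≤ colipNorm g / (lam * (1 - τ)) := by
        have hpos : (0:ℝ) < lam * (1 - τ) := mul_pos hlam0 (by linarith)
        refine colipNorm_le f (div_nonneg hCg0.le hpos.le) fun x y hxy => ?_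
        have h1 : |(r x : ℝ) - r y| ≤ colipNorm g * dist (f x) (f y) := by
          have h := dist_le_colipNorm_mul g hginj (φ x) (φ y)
          rwa [hφdist] at h
        have h2 := hrlow x y
        have h3 := hone x y hxy
        rw [hdA, div_mul_eq_mul_div, le_div_iff₀ hpos]
        nlinarith [dist_nonneg (x := f x) (y := f y)]
      have hd1 : distortion f ≤ (lipNorm g * (lam * (1 + τ))) * (colipNorm g / (lam * (1 - τ))) := by
        have hpos : (0:ℝ) < lam * (1 - τ) := mul_pos hlam0 (by linarith)
        exact mul_le_mul hlipf hcolipf (colipNorm_nonneg f)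
          (mul_nonneg hLg0 (by positivity))
      have hd2 : (lipNorm g * (lam * (1 + τ))) * (colipNorm g / (lam * (1 - τ))) =
          (lipNorm g * colipNorm g) * ((1 + τ) / (1 - τ)) := by
        have h1 : (1:ℝ) - τ ≠ 0 := by linarith
        field_simp
      have hgd : lipNorm g * colipNorm g ≤ 1 + ε' / 8 := hgdist
      have htot : (lipNorm g * colipNorm g) * ((1 + τ) / (1 - τ)) ≤ 1 + ε' := by
        have hfrac : (1 + τ) / (1 - τ) ≤ (1 + ε' / 8) / (1 - ε' / 8) := by
          have hd1 : (0:ℝ) < 1 - ε' / 8 := by linarith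
          exact div_le_div₀ (by linarith) (by linarith) hd1 (by linarith)
        have h0 : 0 ≤ lipNorm g * colipNorm g := mul_nonneg hLg0 hCg0.le
        calc (lipNorm g * colipNorm g) * ((1 + τ) / (1 - τ))
            ≤ (1 + ε' / 8) * ((1 + ε' / 8) / (1 - ε' / 8)) :=
          mul_le_mul hgd hfrac (div_nonneg (by linarith) (by linarith)) (by linarith)
        _ ≤ 1 + ε' := by
          rw [mul_div_assoc', div_le_iff₀ (by linarith)]
          nlinarith
      refine ⟨f, hfinj, ?_⟩
      calc distortion f ≤ _ := hd1
      _ = _ := hd2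
      _ ≤ 1 + ε' := htot
      _ ≤ 1 + ε := by linarith
  · right
    push_neg at hQ
    obtain ⟨m₀, ε, hε, hP⟩ := hQ
    set m := m₀ + 2 with hmdef
    have hm2 : 2 ≤ m := by omega
    have hm2R : (2:ℝ) ≤ m := by exact_mod_cast hm2
    have hmR1 : (1:ℝ) < m := by linarith
    have hmpos : (0:ℝ) < m := by linarith
    have hP' : ∀ g : PathSet m → H, Function.Injective g → 1 + ε < distortion g := by
      intro g hg
      have hsub : m₀ ≤ m := by omega
      have hii : Function.Injective (inclP hsub) := inclP_injective hsub
      calc 1 + ε < distortion (g ∘ inclP hsub) := hP _ (hg.comp hii)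
      _ ≤ distortion g := distortion_comp_le g hg (inclP hsub) (inclP_dist hsub)
    set θ : ℝ := ε / (2 * (1 + ε) * m) with hθdef
    have hθ0 : 0 < θ := div_pos hε (by positivity)
    have hmne : (m:ℝ) ≠ 0 := by positivity
    have hθmEq : θ * m = ε / (2 * (1 + ε)) := by
      rw [hθdef]; field_simp
    have hθm : θ * m < 1 := by
      rw [hθmEq, div_lt_one (by linarith)]; linarith
    have hθδ : 1 ≤ (1 + ε) * (1 - θ * m) := by
      have hx : (1 + ε) * (ε / (2 * (1 + ε))) = ε / 2 := by
        field_simp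
      rw [hθmEq]; nlinarith [hx]
    have hθlt1 : θ < 1 := by nlinarith
    have h1θ : (0:ℝ) < 1 - θ := by linarith
    have hlogm : 0 < Real.log m := Real.log_pos hmR1
    have hgt1 : 1 < 1 / (1 - θ) := one_lt_one_div h1θ (by linarith)
    set β : ℝ := Real.log (1 / (1 - θ)) / Real.log m with hβdef
    have hβ0 : 0 < β := div_pos (Real.log_pos hgt1) hlogm
    refine ⟨β, hβ0, (m:ℝ) ^ (-β), Real.rpow_pos_of_pos hmpos _, fun n hn f hf => ?_⟩
    have hn0 : n ≠ 0 := by omega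
    set k := Nat.log m n with hkdef
    have hkn : m ^ k ≤ n := Nat.pow_log_le_self m hn0
    have hnk : n < m ^ (k + 1) := Nat.lt_pow_succ_log_self (by omega) n
    set L := lipNorm f with hLdef
    have h01 : (pt n 0 (Nat.zero_le _)) ≠ (pt n 1 hn) := fun e => by
      have h2 : ((0:ℕ):ℝ) = ((1:ℕ):ℝ) := congrArg Subtype.val e
      norm_num at h2
    have hL0 : 0 < L := by
      have hr := le_lipNorm f h01
      have hd : dist (pt n 0 (Nat.zero_le _)) (pt n 1 hn) = 1 := by
        rw [pt_dist]; norm_num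
      have hdf : 0 < dist (f (pt n 0 (Nat.zero_le _))) (f (pt n 1 hn)) :=
        dist_pos.mpr fun e => h01 (hf e)
      rw [hd, div_one] at hr
      linarith
    have hbi : Function.Injective (inclP hkn) := inclP_injective hkn
    have hboot := boot m hm2 ε θ hθ0 hθm hθδ hP' k (f ∘ inclP hkn) (hf.comp hbi) L hL0
      (fun x y => by
        have h := dist_le_lipNorm_mul f (inclP hkn x) (inclP hkn y)
        rwa [inclP_dist] at h)
    set a := inclP hkn (pt (m ^ k) 0 (Nat.zero_le _)) with ha
    set b := inclP hkn (pt (m ^ k) (m ^ k) le_rfl) with hb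
    have hboot' : dist (f a) (f b) ≤ (1 - θ) ^ k * (L * (m:ℝ) ^ k) := hboot
    have hab : a ≠ b := by
      intro e
      have h := congrArg Subtype.val e
      have h2 : ((0:ℕ):ℝ) = ((m ^ k : ℕ):ℝ) := h
      have h3 : (0:ℕ) = m ^ k := by exact_mod_cast h2
      have : 0 < m ^ k := Nat.pow_pos (show 0 < m by omega)
      omega
    have hdab : dist a b = ((m ^ k : ℕ):ℝ) := by
      rw [ha, hb, inclP_pt, inclP_pt, pt_dist]
      push_cast
      rw [zero_sub, abs_neg, abs_of_nonneg (by positivity)]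
    have hdfab : 0 < dist (f a) (f b) := dist_pos.mpr fun e => hab (hf e)
    have hcolip : ((m ^ k : ℕ):ℝ) / ((1 - θ) ^ k * (L * (m:ℝ) ^ k)) ≤ colipNorm f := by
      have h1 := le_colipNorm f hab
      rw [hdab] at h1
      exact le_trans (div_le_div_of_nonneg_left (Nat.cast_nonneg _) hdfab hboot') h1
    have hsimp : L * (((m ^ k : ℕ):ℝ) / ((1 - θ) ^ k * (L * (m:ℝ) ^ k))) = (1 / (1 - θ)) ^ k := by
      have hmk : ((m ^ k : ℕ):ℝ) = (m:ℝ) ^ k := by push_cast; ring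
      rw [hmk]
      have hmkne : ((m:ℝ)) ^ k ≠ 0 := by positivity
      have h1θk : ((1:ℝ) - θ) ^ k ≠ 0 := by positivity
      have hip : ((1:ℝ) / (1 - θ)) ^ k = 1 / ((1 - θ) ^ k) := by rw [div_pow, one_pow]
      rw [hip]
      field_simp
    have hdistf : (1 / (1 - θ)) ^ k ≤ distortion f := by
      rw [← hsimp]
      exact mul_le_mul_of_nonneg_left hcolip hL0.le
    -- numeric chain
    have hxβ : (m:ℝ) ^ β = 1 / (1 - θ) := by
      rw [Real.rpow_def_of_pos hmpos, hβdef, mul_comm, div_mul_cancel₀ _ hlogm.ne',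
        Real.exp_log (by positivity)]
    have hcast : (n:ℝ) ≤ (m:ℝ) ^ (k + 1) := by exact_mod_cast hnk.le
    have h1 : (n:ℝ) ^ β ≤ ((m:ℝ) ^ (k + 1)) ^ β :=
      Real.rpow_le_rpow (Nat.cast_nonneg n) hcast hβ0.le
    have h2 : ((m:ℝ) ^ (k + 1)) ^ β = (m:ℝ) ^ (((k:ℝ) + 1) * β) := by
      rw [← Real.rpow_natCast (m:ℝ) (k + 1), ← Real.rpow_mul hmpos.le]
      push_cast; ring_nf
    have h3 : (m:ℝ) ^ (-β) * (m:ℝ) ^ (((k:ℝ) + 1) * β) = (m:ℝ) ^ ((k:ℝ) * β) := by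
      rw [← Real.rpow_add hmpos]; ring_nf
    have h4 : (m:ℝ) ^ ((k:ℝ) * β) = (1 / (1 - θ)) ^ k := by
      rw [mul_comm, Real.rpow_mul hmpos.le, Real.rpow_natCast, hxβ]
    calc (m:ℝ) ^ (-β) * (n:ℝ) ^ β ≤ (m:ℝ) ^ (-β) * ((m:ℝ) ^ (k + 1)) ^ β :=
      mul_le_mul_of_nonneg_left h1 (Real.rpow_pos_of_pos hmpos _).le
    _ = (1 / (1 - θ)) ^ k := by rw [h2, h3, h4]
    _ ≤ distortion f := hdistf
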